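/- In a connected graph G, the maximum size of a matching equals the maximum size of a connected matching, i.e., there is a maximum matching whose saturated vertices induce a connected subgraph. -/
import Mathlib


open Finset

/-- `M` is a matching of `G`: a finite set of edges of `G` that are pairwise disjoint. -/
def IsMatchingF {V : Type*} (G : SimpleGraph V) (M : Finset (Sym2 V)) : Prop :=
  (∀ e ∈ M, e ∈ G.edgeSet) ∧
    ∀ e ∈ M, ∀ f ∈ M, e ≠ f → ∀ v : V, ¬(v ∈ e ∧ v ∈ f)

/-- The set of vertices saturated by the matching `M`. -/
def satSet {V : Type*} (M : Finset (Sym2 V)) : Set V := {v | ∃ e ∈ M, v ∈ e}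

namespace ConnMatch

variable {V : Type*} {G : SimpleGraph V}

/-- Reachability between `u` and `v` inside the subgraph induced on `S`. -/
def Rch (G : SimpleGraph V) (S : Set V) (u v : V) : Prop :=
  ∃ (hu : u ∈ S) (hv : v ∈ S), (G.induce S).Reachable ⟨u, hu⟩ ⟨v, hv⟩

lemma Rch.mem_left {S : Set V} {u v : V} (h : Rch G S u v) : u ∈ S := h.1
lemma Rch.mem_right {S : Set V} {u v : V} (h : Rch G S u v) : v ∈ S := h.2.1

lemma rch_refl {S : Set V} {u : V} (hu : u ∈ S) : Rch G S u u := ⟨hu, hu, .refl _⟩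

lemma Rch.symm {S : Set V} {u v : V} (h : Rch G S u v) : Rch G S v u := by
  obtain ⟨hu, hv, hr⟩ := h
  exact ⟨hv, hu, hr.symm⟩

lemma Rch.trans {S : Set V} {u v w : V} (h : Rch G S u v) (h' : Rch G S v w) :
    Rch G S u w := by
  obtain ⟨hu, hv, hr⟩ := h
  obtain ⟨hv', hw, hr'⟩ := h'
  exact ⟨hu, hw, hr.trans hr'⟩

lemma induce_adj {S : Set V} {a b : ↥S} : (G.induce S).Adj a b ↔ G.Adj ↑a ↑b := Iff.rfl

lemma rch_of_adj {S : Set V} {u v : V} (hu : u ∈ S) (hv : v ∈ S) (h : G.Adj u v) :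
    Rch G S u v :=
  ⟨hu, hv, SimpleGraph.Adj.reachable (induce_adj.2 h)⟩

lemma rch_transfer_aux {S T : Set V} :
    ∀ {a b : ↥S} (_ : (G.induce S).Walk a b)
      (_ : ∀ w : ↥S, (G.induce S).Reachable a w → (w : V) ∈ T), Rch G T a b := by
  intro a b p
  induction p with
  | nil => exact fun hT => rch_refl (hT _ (.refl _))
  | @cons a c b h p ih =>
    intro hT
    have hac : Rch G T ↑a ↑c :=
      rch_of_adj (hT a (.refl _)) (hT c h.reachable) (induce_adj.1 h)
    exact hac.trans (ih (fun w hw => hT w (h.reachable.trans hw)))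

lemma Rch.transfer {S T : Set V} {u v : V} (h : Rch G S u v)
    (hT : ∀ w, Rch G S u w → w ∈ T) : Rch G T u v := by
  obtain ⟨hu, hv, hr⟩ := h
  obtain ⟨p⟩ := hr
  exact rch_transfer_aux p (fun w hw => hT w ⟨hu, w.2, hw⟩)

lemma Rch.mono {S T : Set V} {u v : V} (hST : S ⊆ T) (h : Rch G S u v) : Rch G T u v :=
  h.transfer (fun w hw => hST hw.mem_right)

/-- Auxiliary walk induction for `exists_adj_class`. -/
lemma exists_adj_class_aux {S : Set V} {y : V} :
    ∀ {a b : ↥S} (_ : (G.induce S).Walk a b), (b : V) = y → (a : V) ≠ y →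
    ∃ c, c ∈ S ∧ c ≠ y ∧ G.Adj c y ∧ Rch G (S \ {y}) ↑a c := by
  intro a b p
  induction p with
  | nil => intro hb ha; exact absurd hb ha
  | @cons a c b h p ih =>
    intro hb ha
    by_cases hcy : (c : V) = y
    · exact ⟨a, a.2, ha, by rw [← hcy]; exact induce_adj.1 h,
        rch_refl (S := S \ {y}) (u := (a : V)) ⟨a.2, ha⟩⟩
    · obtain ⟨c', hc'S, hc'y, hadj, hrch⟩ := ih hb hcy
      exact ⟨c', hc'S, hc'y, hadj,
        (rch_of_adj (S := S \ {y}) (u := (a : V)) (v := (c : V)) ⟨a.2, ha⟩ ⟨c.2, hcy⟩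
          (induce_adj.1 h)).trans hrch⟩

/-- If `S` induces a connected graph, every vertex of `S \ {y}` can reach, inside
`S \ {y}`, a neighbor of `y`. -/
lemma exists_adj_class {S : Set V} (hpre : ∀ u v, u ∈ S → v ∈ S → Rch G S u v)
    {y v : V} (hy : y ∈ S) (hv : v ∈ S) (hvy : v ≠ y) :
    ∃ c, c ∈ S ∧ c ≠ y ∧ G.Adj c y ∧ Rch G (S \ {y}) v c := by
  obtain ⟨hv', hy', hr⟩ := hpre v y hv hy
  obtain ⟨p⟩ := hr
  exact exists_adj_class_aux p rfl hvy


section MatchLems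

lemma sym2_exists_mem (e : Sym2 V) : ∃ v, v ∈ e := by
  induction e using Sym2.ind with
  | _ a b => exact ⟨a, Sym2.mem_mk_left a b⟩

lemma other_rep {e : Sym2 V} (he : e ∈ G.edgeSet) {a : V} (ha : a ∈ e) :
    ∃ b, G.Adj a b ∧ e = s(a, b) := by
  induction e using Sym2.ind with
  | _ p q =>
    have hpq : G.Adj p q := he
    rcases Sym2.mem_iff.1 ha with rfl | rfl
    · exact ⟨q, hpq, rfl⟩
    · exact ⟨p, hpq.symm, Sym2.eq_swap⟩

lemma mem_or_adj {e : Sym2 V} (he : e ∈ G.edgeSet) {v w : V} (hv : v ∈ e) (hw : w ∈ e) :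
    w = v ∨ G.Adj v w := by
  obtain ⟨b, hb, rfl⟩ := other_rep he hv
  rcases Sym2.mem_iff.1 hw with rfl | rfl
  · exact Or.inl rfl
  · exact Or.inr hb

lemma matching_subset {A B : Finset (Sym2 V)} (h : A ⊆ B) (hB : IsMatchingF G B) :
    IsMatchingF G A :=
  ⟨fun e he => hB.1 e (h he), fun e he f hf => hB.2 e (h he) f (h hf)⟩

lemma eq_of_shared {M : Finset (Sym2 V)} (hM : IsMatchingF G M) {e f : Sym2 V} {v : V}
    (he : e ∈ M) (hf : f ∈ M) (hv : v ∈ e) (hv' : v ∈ f) : e = f := by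
  by_contra hne
  exact hM.2 e he f hf hne v ⟨hv, hv'⟩

lemma satSet_union [DecidableEq (Sym2 V)] (A B : Finset (Sym2 V)) :
    satSet (A ∪ B) = satSet A ∪ satSet B := by
  ext v
  simp only [satSet, Set.mem_setOf_eq, Set.mem_union, Finset.mem_union]
  aesop

lemma satSet_insert [DecidableEq (Sym2 V)] (e : Sym2 V) (M : Finset (Sym2 V)) :
    satSet (insert e M) = {v | v ∈ e} ∪ satSet M := by
  ext v
  simp only [satSet, Set.mem_setOf_eq, Set.mem_union, Finset.mem_insert]
  aesop

lemma satSet_mono {A B : Finset (Sym2 V)} (h : A ⊆ B) : satSet A ⊆ satSet B := by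
  rintro v ⟨e, he, hv⟩
  exact ⟨e, h he, hv⟩

lemma matching_union [DecidableEq (Sym2 V)] {A B : Finset (Sym2 V)}
    (hA : IsMatchingF G A) (hB : IsMatchingF G B)
    (hd : ∀ v, v ∈ satSet A → v ∈ satSet B → False) : IsMatchingF G (A ∪ B) := by
  constructor
  · intro e he
    rcases Finset.mem_union.1 he with h | h
    · exact hA.1 e h
    · exact hB.1 e h
  · intro e he f hf hne v ⟨hve, hvf⟩
    rcases Finset.mem_union.1 he with h | h <;> rcases Finset.mem_union.1 hf with h' | h'
    · exact hA.2 e h f h' hne v ⟨hve, hvf⟩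
    · exact hd v ⟨e, h, hve⟩ ⟨f, h', hvf⟩
    · exact hd v ⟨f, h', hvf⟩ ⟨e, h, hve⟩
    · exact hB.2 e h f h' hne v ⟨hve, hvf⟩

lemma matching_singleton {e : Sym2 V} (he : e ∈ G.edgeSet) : IsMatchingF G {e} := by
  constructor
  · intro f hf
    rw [Finset.mem_singleton] at hf
    rwa [hf]
  · intro f hf g hg hne
    rw [Finset.mem_singleton] at hf hg
    exact absurd (hf.trans hg.symm) hne

end MatchLems

/-- Key exchange lemma: if `N` is a matching whose saturated set `satSet N` induces a
connected subgraph and is perfectly matched, and `x ∉ satSet N` is adjacent to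
`a ∈ satSet N`, then we can rebuild the matching to absorb `x`, expelling exactly one
vertex `z`, keeping the induced graph connected. -/
lemma lemB (G : SimpleGraph V) : ∀ (n : ℕ) (N : Finset (Sym2 V)), N.card ≤ n →
    IsMatchingF G N →
    (∀ u v, u ∈ satSet N → v ∈ satSet N → Rch G (satSet N) u v) →
    ∀ x a : V, x ∉ satSet N → a ∈ satSet N → G.Adj x a →
    ∃ (N' : Finset (Sym2 V)) (z : V), IsMatchingF G N' ∧ N'.card = N.card ∧
      z ∈ satSet N ∧ satSet N' = (satSet N \ {z}) ∪ {x} ∧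
      (∀ u v, u ∈ satSet N' → v ∈ satSet N' → Rch G (satSet N') u v) := by
  intro n
  induction n with
  | zero =>
    intro N hcard hmatch hpre x a hx ha hadj
    exfalso
    obtain ⟨e, he, -⟩ := ha
    have : N = ∅ := Finset.card_eq_zero.1 (Nat.le_zero.1 hcard)
    simp [this] at he
  | succ n ih =>
    intro N hcard hmatch hpre x a hx ha hadj
    classical
    obtain ⟨e0, he0N, hae0⟩ := ha
    obtain ⟨y, hay, he0⟩ := other_rep (hmatch.1 e0 he0N) hae0
    have hya : y ≠ a := fun h => G.irrefl (h ▸ hay)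
    have hye0 : y ∈ e0 := by rw [he0]; exact Sym2.mem_mk_right a y
    have haS : a ∈ satSet N := ⟨e0, he0N, hae0⟩
    have hyS : y ∈ satSet N := ⟨e0, he0N, hye0⟩
    have hxa : x ≠ a := hadj.ne
    have hNpos : 1 ≤ N.card := Finset.card_pos.2 ⟨e0, he0N⟩
    set S := satSet N with hS
    have huniq : ∀ e ∈ N, ∀ v, v ∈ e → v ∈ e0 → e = e0 := fun e he v hv hv0 =>
      eq_of_shared hmatch he he0N hv hv0
    have hmem_e0 : ∀ v, v ∈ e0 ↔ v = a ∨ v = y := by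
      intro v; rw [he0]; exact Sym2.mem_iff
    have hsat_erase : satSet (N.erase e0) = S \ {v | v ∈ e0} := by
      ext v
      constructor
      · rintro ⟨e, he, hv⟩
        have he' := Finset.mem_erase.1 he
        refine ⟨⟨e, he'.2, hv⟩, fun hv0 => he'.1 (huniq e he'.2 v hv hv0)⟩
      · rintro ⟨⟨e, he, hv⟩, hv0⟩
        refine ⟨e, Finset.mem_erase.2 ⟨fun h => hv0 (h ▸ hv), he⟩, hv⟩
    have hxS : x ∉ S := hx
    by_cases h1 : ∀ v ∈ S \ {y}, Rch G (S \ {y}) a v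
    · -- Branch 1: removing y keeps things connected
      refine ⟨insert s(x, a) (N.erase e0), y, ?_, ?_, hyS, ?_, ?_⟩
      · rw [Finset.insert_eq]
        refine matching_union (matching_singleton (G.mem_edgeSet.2 hadj))
          (matching_subset (Finset.erase_subset _ _) hmatch) ?_
        · intro v hv1 hv2
          rw [hsat_erase] at hv2
          have hv1' : v = x ∨ v = a := by
            obtain ⟨e, he, hv⟩ := hv1
            rw [Finset.mem_singleton] at he
            subst he
            exact Sym2.mem_iff.1 hv
          rcases hv1' with rfl | rfl
          · exact hxS hv2.1
          · exact hv2.2 ((hmem_e0 _).2 (Or.inl rfl))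
      · rw [Finset.card_insert_of_notMem, Finset.card_erase_of_mem he0N]
        · omega
        · intro hmem
          exact hxS ⟨_, Finset.mem_erase.1 hmem |>.2, Sym2.mem_mk_left x a⟩
      · rw [satSet_insert, hsat_erase]
        ext v
        simp only [Set.mem_union, Set.mem_setOf_eq, Set.mem_diff, Set.mem_singleton_iff,
          hmem_e0, Sym2.mem_iff]
        constructor
        · rintro ((hvx | hva) | h)
          · exact Or.inr hvx
          · rw [hva]; exact Or.inl ⟨haS, fun h => hya h.symm⟩
          · exact Or.inl ⟨h.1, fun hvy => h.2 (Or.inr hvy)⟩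
        · rintro (⟨hvS, hvy⟩ | hvx)
          · by_cases hva : v = a
            · exact Or.inl (Or.inr hva)
            · exact Or.inr ⟨hvS, fun h => h.elim hva hvy⟩
          · exact Or.inl (Or.inl hvx)
      · rw [satSet_insert, hsat_erase]
        intro p q hp hq
        have key : ∀ v, v ∈ ({w | w ∈ s(x,a)} ∪ (S \ {w | w ∈ e0}) : Set V) →
            Rch G ({w | w ∈ s(x,a)} ∪ (S \ {w | w ∈ e0}) : Set V) v a := by
          set T : Set V := {w | w ∈ s(x,a)} ∪ (S \ {w | w ∈ e0}) with hT
          have haT : a ∈ T := Or.inl ((Sym2.mem_iff).2 (Or.inr rfl))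
          have hsub : S \ {y} ⊆ T := by
            intro v hv
            by_cases hva : v = a
            · exact hva ▸ haT
            · exact Or.inr ⟨hv.1, fun h => ((hmem_e0 v).1 h).elim hva hv.2⟩
          intro v hv
          rcases hv with hv | hv
          · rcases Sym2.mem_iff.1 hv with rfl | rfl
            · exact rch_of_adj (Or.inl ((Sym2.mem_iff).2 (Or.inl rfl))) haT hadj
            · exact rch_refl haT
          · have hvS : v ∈ S \ {y} := ⟨hv.1, fun h => hv.2 ((hmem_e0 v).2 (Or.inr h))⟩
            exact ((h1 v hvS).mono hsub).symm
        exact (key p hp).trans (key q hq).symm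
    · -- Branch 2: removing y disconnects; recurse into a far component
      push_neg at h1
      obtain ⟨d, hdS, hd⟩ := h1
      obtain ⟨c, hcS, hcy, hc_adj, hdc⟩ := exists_adj_class hpre hyS hdS.1 hdS.2
      have hca : ¬ Rch G (S \ {y}) a c := fun h => hd (h.trans hdc.symm)
      set D : Set V := {v | Rch G (S \ {y}) c v} with hD
      have hcD : c ∈ D := rch_refl (S := S \ {y}) ⟨hcS, hcy⟩
      have haD : a ∉ D := fun h => hca (Rch.symm h)
      have hDS : D ⊆ S \ {y} := fun v hv => Rch.mem_right hv
      have hyD : y ∉ D := fun h => (hDS h).2 rfl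
      set ND := N.filter (fun e => ∀ v ∈ e, v ∈ D) with hND
      have hNDsub : ND ⊆ N := Finset.filter_subset _ _
      have hNDmatch : IsMatchingF G ND := matching_subset hNDsub hmatch
      have hclose : ∀ e ∈ N, ∀ v ∈ e, v ∈ D → e ∈ ND := by
        intro e he v hv hvD
        refine Finset.mem_filter.2 ⟨he, ?_⟩
        intro w hw
        rcases mem_or_adj (hmatch.1 e he) hv hw with h | h
        · rwa [h]
        · have hwS : w ∈ S := ⟨e, he, hw⟩
          have hwy : w ≠ y := by
            rintro rfl
            have heq : e = e0 := huniq e he w hw hye0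
            subst heq
            rcases (hmem_e0 v).1 hv with rfl | rfl
            · exact haD hvD
            · exact hyD hvD
          have hvS' : v ∈ S \ {y} := ⟨⟨e, he, hv⟩, (hDS hvD).2⟩
          exact Rch.trans hvD (rch_of_adj hvS' ⟨hwS, hwy⟩ h)
      have hsatND : satSet ND = D := by
        ext v
        constructor
        · rintro ⟨e, he, hv⟩
          exact (Finset.mem_filter.1 he).2 v hv
        · intro hvD
          obtain ⟨e, he, hv⟩ := (hDS hvD).1
          exact ⟨e, hclose e he v hv hvD, hv⟩
      have he0ND : e0 ∉ ND := fun h => haD ((Finset.mem_filter.1 h).2 a hae0)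
      have hNDlt : ND.card ≤ n := by
        have : ND.card < N.card := Finset.card_lt_card ⟨hNDsub, fun h => he0ND (h he0N)⟩
        omega
      have hpreD : ∀ u v, u ∈ D → v ∈ D → Rch G D u v := by
        intro p q hp hq
        refine Rch.transfer ((Rch.symm hp).trans hq) (fun w hw => ?_)
        exact Rch.trans hp hw
      obtain ⟨N', z, hN'match, hN'card, hzD, hsatN', hpreN'⟩ :=
        ih ND hNDlt hNDmatch (by rw [hsatND]; exact hpreD) y c
          (by rw [hsatND]; exact hyD) (by rw [hsatND]; exact hcD) hc_adj.symm
      rw [hsatND] at hzD hsatN'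
      have hzS : z ∈ S := (hDS hzD).1
      have hzy : z ≠ y := (hDS hzD).2
      have hza : z ≠ a := fun h => haD (h ▸ hzD)
      set A := (N.erase e0) \ ND with hA
      have hsatA : satSet A = (S \ D) \ {v | v ∈ e0} := by
        ext v
        constructor
        · rintro ⟨e, he, hv⟩
          have he' := Finset.mem_sdiff.1 he
          have he'' := Finset.mem_erase.1 he'.1
          refine ⟨⟨⟨e, he''.2, hv⟩, fun hvD => he'.2 (hclose e he''.2 v hv hvD)⟩,
            fun hv0 => he''.1 (huniq e he''.2 v hv hv0)⟩
        · rintro ⟨⟨⟨e, he, hv⟩, hvD⟩, hv0⟩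
          refine ⟨e, Finset.mem_sdiff.2 ⟨Finset.mem_erase.2
            ⟨fun h => hv0 (h ▸ hv), he⟩, fun hND => hvD (hsatND ▸ ⟨e, hND, hv⟩)⟩, hv⟩
      -- the new matching
      refine ⟨insert s(x, a) (A ∪ N'), z, ?_, ?_, hzS, ?_, ?_⟩
      · rw [Finset.insert_eq]
        refine matching_union (matching_singleton (G.mem_edgeSet.2 hadj)) (matching_union
          (matching_subset (Finset.Subset.trans (Finset.sdiff_subset)
            (Finset.erase_subset _ _)) hmatch) hN'match ?_) ?_
        · intro v hv1 hv2
          rw [hsatA] at hv1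
          rw [hsatN'] at hv2
          rcases hv2 with ⟨hvD, -⟩ | hvy
          · exact hv1.1.2 hvD
          · exact hv1.2 ((hmem_e0 v).2 (Or.inr hvy))
        · intro v hv1 hv2
          obtain ⟨e, he, hv⟩ := hv1
          rw [Finset.mem_singleton] at he
          subst he
          rw [satSet_union, hsatA, hsatN'] at hv2
          rcases Sym2.mem_iff.1 hv with rfl | rfl
          · rcases hv2 with h | h
            · exact hxS h.1.1
            · rcases h with ⟨hvD, -⟩ | hvy
              · exact hxS (hDS hvD).1
              · exact hxS (hvy ▸ hyS)
          · rcases hv2 with h | h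
            · exact h.2 ((hmem_e0 _).2 (Or.inl rfl))
            · rcases h with ⟨hvD, -⟩ | hvy
              · exact haD hvD
              · exact hya hvy.symm
      · -- cardinality
        have hdisjAN' : Disjoint A N' := by
          rw [Finset.disjoint_left]
          intro e heA heN'
          obtain ⟨v, hv⟩ := sym2_exists_mem e
          have h1 : v ∈ satSet A := ⟨e, heA, hv⟩
          have h2 : v ∈ satSet N' := ⟨e, heN', hv⟩
          rw [hsatA] at h1
          rw [hsatN'] at h2
          rcases h2 with ⟨hvD, -⟩ | hvy
          · exact h1.1.2 hvD
          · exact h1.2 ((hmem_e0 v).2 (Or.inr hvy))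
        have hxnot : s(x, a) ∉ A ∪ N' := by
          intro hmem
          have hxmem : x ∈ satSet (A ∪ N') := ⟨_, hmem, Sym2.mem_mk_left x a⟩
          rw [satSet_union, hsatA, hsatN'] at hxmem
          rcases hxmem with h | h
          · exact hxS h.1.1
          · rcases h with ⟨hvD, -⟩ | hvy
            · exact hxS (hDS hvD).1
            · exact hxS (hvy ▸ hyS)
        have hAunion : A ∪ ND = N.erase e0 := by
          rw [hA]
          exact Finset.sdiff_union_of_subset (fun e he =>
            Finset.mem_erase.2 ⟨fun h => he0ND (h ▸ he), hNDsub he⟩)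
        have hcards : A.card + ND.card = N.card - 1 := by
          rw [← Finset.card_union_of_disjoint (Finset.sdiff_disjoint), hAunion,
            Finset.card_erase_of_mem he0N]
        rw [Finset.card_insert_of_notMem hxnot, Finset.card_union_of_disjoint hdisjAN',
          hN'card]
        omega
      · -- saturated set
        rw [satSet_insert, satSet_union, hsatA, hsatN']
        ext v
        simp only [Set.mem_union, Set.mem_setOf_eq, Set.mem_diff, Set.mem_singleton_iff,
          Sym2.mem_iff, hmem_e0]
        constructor
        · rintro ((hvx | hva) | (⟨⟨hvS, hvD⟩, hv0⟩ | (⟨hvD, hvz⟩ | hvy)))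
          · exact Or.inr hvx
          · rw [hva]; exact Or.inl ⟨haS, fun h => hza h.symm⟩
          · exact Or.inl ⟨hvS, fun h => hvD (by rw [h]; exact hzD)⟩
          · exact Or.inl ⟨(hDS hvD).1, hvz⟩
          · rw [hvy]; exact Or.inl ⟨hyS, fun h => hzy h.symm⟩
        · rintro (⟨hvS, hvz⟩ | hvx)
          · by_cases hva : v = a
            · exact Or.inl (Or.inr hva)
            · by_cases hvy : v = y
              · exact Or.inr (Or.inr (Or.inr hvy))
              · by_cases hvD : v ∈ D
                · exact Or.inr (Or.inr (Or.inl ⟨hvD, hvz⟩))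
                · exact Or.inr (Or.inl ⟨⟨hvS, hvD⟩, fun h => h.elim hva hvy⟩)
          · exact Or.inl (Or.inl hvx)
      · -- connectivity
        rw [satSet_insert, satSet_union, hsatA, hsatN']
        set T : Set V := {w | w ∈ s(x,a)} ∪ (((S \ D) \ {v | v ∈ e0}) ∪ ((D \ {z}) ∪ {y}))
          with hT
        have hyT : y ∈ T := Or.inr (Or.inr (Or.inr rfl))
        have haT : a ∈ T := Or.inl ((Sym2.mem_iff).2 (Or.inr rfl))
        have hN'T : ((D \ {z}) ∪ {y} : Set V) ⊆ T := fun v hv => Or.inr (Or.inr hv)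
        have key : ∀ v, v ∈ T → Rch G T v y := by
          intro v hv
          have main : ∀ w, w ∈ S → w ∉ D → w ≠ y → Rch G T w y := by
            intro w hwS hwD hwy
            obtain ⟨c', hc'S, hc'y, hc'adj, hrch⟩ := exists_adj_class hpre hyS hwS hwy
            have htrans : Rch G T w c' := by
              refine Rch.transfer hrch (fun w' hw' => ?_)
              have hw'S : w' ∈ S \ {y} := hw'.mem_right
              have hw'D : w' ∈ D → False := fun hmem =>
                hwD (Rch.trans hmem (Rch.symm hw'))
              by_cases hw'a : w' = a
              · exact hw'a ▸ haT
              · refine Or.inr (Or.inl ⟨⟨hw'S.1, hw'D⟩,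
                  fun h0 => ((hmem_e0 w').1 h0).elim hw'a hw'S.2⟩)
            exact htrans.trans (rch_of_adj htrans.mem_right hyT hc'adj)
          rcases hv with hv | (hv | hv)
          · rcases Sym2.mem_iff.1 hv with rfl | rfl
            · refine Rch.trans (rch_of_adj (S := T) ?_ haT hadj) (main _ haS haD (Ne.symm hya))
              exact Or.inl (Sym2.mem_iff.2 (Or.inl rfl))
            · exact main _ haS haD (Ne.symm hya)
          · exact main v hv.1.1 hv.1.2 (fun h => hv.2 ((hmem_e0 v).2 (Or.inr h)))
          · rcases hv with ⟨hvD, hvz⟩ | rfl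
            · have : v ∈ satSet N' := hsatN' ▸ Or.inl ⟨hvD, hvz⟩
              have hyN' : y ∈ satSet N' := hsatN' ▸ Or.inr rfl
              exact (hpreN' v y this hyN').mono (by rw [hsatN']; exact hN'T)
            · exact rch_refl hyT
        intro p q hp hq
        exact (key p hp).trans (key q hq).symm

variable (G) in
/-- The number of ordered pairs of vertices mutually reachable inside the subgraph
induced on the saturated set of `M`. -/
noncomputable def Pm [Fintype V] (M : Finset (Sym2 V)) : ℕ :=
  (@Finset.filter (V × V) (fun p => Rch G (satSet M) p.1 p.2)
    (fun _ => Classical.propDecidable _) Finset.univ).card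

lemma mem_goodF [Fintype V] {M : Finset (Sym2 V)} {p : V × V} :
    p ∈ (@Finset.filter (V × V) (fun p => Rch G (satSet M) p.1 p.2)
      (fun _ => Classical.propDecidable _) Finset.univ) ↔ Rch G (satSet M) p.1 p.2 := by
  have := @Finset.mem_filter (V × V) (fun p => Rch G (satSet M) p.1 p.2)
    (fun _ => Classical.propDecidable _) Finset.univ p
  simpa using this

end ConnMatch

open ConnMatch

/-- In a connected graph there is a maximum matching whose saturated vertices induce a
connected subgraph: the maximum sizes of matchings and of connected matchings coincide. -/
theorem exists_maximum_connected_matching {V : Type*} [Fintype V]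
    (G : SimpleGraph V) (hconn : G.Connected) :
    ∃ M : Finset (Sym2 V), IsMatchingF G M ∧
      (G.induce (satSet M)).Preconnected ∧
      ∀ M' : Finset (Sym2 V), IsMatchingF G M' → M'.card ≤ M.card := by
  classical
  let 𝒞 : Finset (Finset (Sym2 V)) := Finset.univ.filter (fun M => IsMatchingF G M)
  have hemp : (∅ : Finset (Sym2 V)) ∈ 𝒞 := by
    refine Finset.mem_filter.2 ⟨Finset.mem_univ _, by simp [IsMatchingF]⟩
  obtain ⟨M₀, hM₀, hmax₀⟩ := 𝒞.exists_max_image Finset.card ⟨∅, hemp⟩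
  let 𝒞₂ := 𝒞.filter (fun M => M.card = M₀.card)
  have hM₀2 : M₀ ∈ 𝒞₂ := Finset.mem_filter.2 ⟨hM₀, rfl⟩
  obtain ⟨M, hM2, hmaxP⟩ := 𝒞₂.exists_max_image (Pm G) ⟨M₀, hM₀2⟩
  have hMmem := Finset.mem_filter.1 hM2
  have hMmatch : IsMatchingF G M := (Finset.mem_filter.1 hMmem.1).2
  have hMcard : M.card = M₀.card := hMmem.2
  have hmaxcard : ∀ M' : Finset (Sym2 V), IsMatchingF G M' → M'.card ≤ M.card := by
    intro M' h
    rw [hMcard]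
    exact hmax₀ M' (Finset.mem_filter.2 ⟨Finset.mem_univ _, h⟩)
  refine ⟨M, hMmatch, ?_, hmaxcard⟩
  by_contra hnp
  set S := satSet M with hSdef
  have hnp' : ∃ u₀ w₀ : ↥S, ¬ (G.induce S).Reachable u₀ w₀ := by
    by_contra hc
    push_neg at hc
    exact hnp (fun u v => hc u v)
  obtain ⟨u₀, w₀, hbad₀⟩ := hnp'
  have hbadset : ((Finset.univ : Finset (V × V)).filter
      (fun p => p.1 ∈ S ∧ p.2 ∈ S ∧ ¬ Rch G S p.1 p.2)).Nonempty := by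
    refine ⟨(↑u₀, ↑w₀), Finset.mem_filter.2 ⟨Finset.mem_univ _, u₀.2, w₀.2, ?_⟩⟩
    rintro ⟨h1, h2, hr⟩
    exact hbad₀ hr
  obtain ⟨⟨u, w⟩, hprmem, hmin⟩ := Finset.exists_min_image _ (fun p => G.dist p.1 p.2) hbadset
  obtain ⟨-, huS, hwS, hbad⟩ := Finset.mem_filter.1 hprmem
  simp only at hmin huS hwS hbad
  have hne : u ≠ w := by
    intro h
    exact hbad (h ▸ rch_refl huS)
  obtain ⟨p, hp⟩ := (hconn.preconnected u w).exists_walk_length_eq_dist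
  revert hp
  cases p with
  | nil => intro hp; exact hne rfl
  | @cons _ b _ h1 q =>
    intro hp
    rw [SimpleGraph.Walk.length_cons] at hp
    have hd2 : 2 ≤ G.dist u w := by
      by_contra hlt
      push_neg at hlt
      have hq0 : q.length = 0 := by omega
      have hbweq : b = w := by
        revert hq0
        cases q with
        | nil => intro _; rfl
        | cons h2 r => intro hq0; simp at hq0
      subst hbweq
      exact hbad (rch_of_adj huS hwS h1)
    have hbS : b ∉ S := by
      intro hbSat
      by_cases hub : Rch G S u b
      · by_cases hbw : Rch G S b w
        · exact hbad (hub.trans hbw)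
        · have hmem : (b, w) ∈ (Finset.univ : Finset (V × V)).filter
              (fun p => p.1 ∈ S ∧ p.2 ∈ S ∧ ¬ Rch G S p.1 p.2) :=
            Finset.mem_filter.2 ⟨Finset.mem_univ _, hbSat, hwS, hbw⟩
          have h1' := hmin _ hmem
          have hle : G.dist b w ≤ q.length := SimpleGraph.dist_le q
          simp only at h1'
          omega
      · have hmem : (u, b) ∈ (Finset.univ : Finset (V × V)).filter
            (fun p => p.1 ∈ S ∧ p.2 ∈ S ∧ ¬ Rch G S p.1 p.2) :=
          Finset.mem_filter.2 ⟨Finset.mem_univ _, huS, hbSat, hub⟩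
        have h1' := hmin _ hmem
        have hle : G.dist u b ≤ 1 := by
          have := SimpleGraph.dist_le (SimpleGraph.Walk.cons h1 SimpleGraph.Walk.nil)
          simpa using this
        simp only at h1'
        omega
    by_cases hd3 : 3 ≤ G.dist u w
    · -- distance at least 3 : augment the matching, contradiction with maximality
      revert hp
      cases q with
      | nil => intro hp; simp at hp; omega
      | @cons _ b2 _ h2 r =>
        intro hp
        rw [SimpleGraph.Walk.length_cons] at hp
        have hb2S : b2 ∉ S := by
          intro hsat
          by_cases hub2 : Rch G S u b2
          · by_cases hb2w : Rch G S b2 w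
            · exact hbad (hub2.trans hb2w)
            · have hmem : (b2, w) ∈ (Finset.univ : Finset (V × V)).filter
                  (fun p => p.1 ∈ S ∧ p.2 ∈ S ∧ ¬ Rch G S p.1 p.2) :=
                Finset.mem_filter.2 ⟨Finset.mem_univ _, hsat, hwS, hb2w⟩
              have h1' := hmin _ hmem
              have hle : G.dist b2 w ≤ r.length := SimpleGraph.dist_le r
              simp only at h1'
              omega
          · have hmem : (u, b2) ∈ (Finset.univ : Finset (V × V)).filter
                (fun p => p.1 ∈ S ∧ p.2 ∈ S ∧ ¬ Rch G S p.1 p.2) :=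
              Finset.mem_filter.2 ⟨Finset.mem_univ _, huS, hsat, hub2⟩
            have h1' := hmin _ hmem
            have hle : G.dist u b2 ≤ 2 := by
              have := SimpleGraph.dist_le (SimpleGraph.Walk.cons h1
                (SimpleGraph.Walk.cons h2 SimpleGraph.Walk.nil))
              simpa using this
            simp only at h1'
            omega
        have hnotmem : s(b, b2) ∉ M := fun hmem => hbS ⟨_, hmem, Sym2.mem_mk_left _ _⟩
        have hbig : IsMatchingF G (insert s(b, b2) M) := by
          rw [Finset.insert_eq]
          refine matching_union (matching_singleton (G.mem_edgeSet.2 h2)) hMmatch ?_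
          intro v hv1 hv2
          obtain ⟨e, he, hv⟩ := hv1
          rw [Finset.mem_singleton] at he
          subst he
          rcases Sym2.mem_iff.1 hv with rfl | rfl
          · exact hbS hv2
          · exact hb2S hv2
        have hcontr := hmaxcard _ hbig
        rw [Finset.card_insert_of_notMem hnotmem] at hcontr
        omega
    · -- distance exactly 2 : the exchange argument
      have hql : q.length = 1 := by omega
      have hbw : G.Adj b w := by
        revert hql
        cases q with
        | nil => intro hql; simp at hql
        | @cons _ b2 _ h2 r =>
          intro hql
          rw [SimpleGraph.Walk.length_cons] at hql
          have hr0 : r.length = 0 := by omega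
          have : b2 = w := by
            revert hr0
            cases r with
            | nil => intro _; rfl
            | cons _ _ => intro hr0; simp at hr0
          exact this ▸ h2
      set C1 : Set V := {v | Rch G S u v} with hC1
      have hedge_close : ∀ e ∈ M, ∀ v ∈ e, v ∈ C1 → ∀ w' ∈ e, w' ∈ C1 := by
        intro e he v hv hvC w' hw'
        rcases mem_or_adj (hMmatch.1 e he) hv hw' with h | h
        · rwa [h]
        · exact Rch.trans hvC (rch_of_adj hvC.mem_right ⟨e, he, hw'⟩ h)
      set N := M.filter (fun e => ∀ v ∈ e, v ∈ C1) with hN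
      have hNsub : N ⊆ M := Finset.filter_subset _ _
      have hsatN : satSet N = C1 := by
        ext v
        constructor
        · rintro ⟨e, he, hv⟩
          exact (Finset.mem_filter.1 he).2 v hv
        · intro hvC
          obtain ⟨e, he, hv⟩ := hvC.mem_right
          exact ⟨e, Finset.mem_filter.2 ⟨he, hedge_close e he v hv hvC⟩, hv⟩
      have hpreC1 : ∀ p' q', p' ∈ C1 → q' ∈ C1 → Rch G C1 p' q' := by
        intro p' q' hp' hq'
        exact Rch.transfer ((Rch.symm hp').trans hq') (fun w' hw' => Rch.trans hp' hw')
      have huC1 : u ∈ C1 := rch_refl huS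
      have hwC1 : w ∉ C1 := hbad
      have hxC1 : b ∉ C1 := fun h => hbS h.mem_right
      obtain ⟨N', z, hN'match, hN'card, hzC1, hsatN', hpreN'⟩ :=
        lemB G N.card N le_rfl (matching_subset hNsub hMmatch)
          (by rw [hsatN]; exact hpreC1) b u (by rw [hsatN]; exact hxC1)
          (by rw [hsatN]; exact huC1) h1.symm
      rw [hsatN] at hzC1 hsatN'
      have hzS : z ∈ S := hzC1.mem_right
      set M2 := (M \ N) ∪ N' with hM2
      have hsatMN : satSet (M \ N) = S \ C1 := by
        ext v
        constructor
        · rintro ⟨e, he, hv⟩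
          have he' := Finset.mem_sdiff.1 he
          refine ⟨⟨e, he'.1, hv⟩, fun hvC =>
            he'.2 (Finset.mem_filter.2 ⟨he'.1, hedge_close e he'.1 v hv hvC⟩)⟩
        · rintro ⟨⟨e, he, hv⟩, hvC⟩
          exact ⟨e, Finset.mem_sdiff.2
            ⟨he, fun hN' => hvC ((Finset.mem_filter.1 hN').2 v hv)⟩, hv⟩
      have hsatM2 : satSet M2 = (S \ {z}) ∪ {b} := by
        rw [hM2, satSet_union, hsatMN, hsatN']
        ext v
        simp only [Set.mem_union, Set.mem_diff, Set.mem_singleton_iff]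
        constructor
        · rintro (⟨hvS, hvC⟩ | (⟨hvC, hvz⟩ | hvb))
          · exact Or.inl ⟨hvS, fun h => hvC (by rw [h]; exact hzC1)⟩
          · exact Or.inl ⟨hvC.mem_right, hvz⟩
          · exact Or.inr hvb
        · rintro (⟨hvS, hvz⟩ | hvb)
          · by_cases hvC : v ∈ C1
            · exact Or.inr (Or.inl ⟨hvC, hvz⟩)
            · exact Or.inl ⟨hvS, hvC⟩
          · exact Or.inr (Or.inr hvb)
      have hdis : ∀ v, v ∈ satSet (M \ N) → v ∈ satSet N' → False := by
        intro v h1' h2'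
        rw [hsatMN] at h1'
        rw [hsatN'] at h2'
        rcases h2' with ⟨hvC, -⟩ | hvb
        · exact h1'.2 hvC
        · exact hbS (by rw [← hvb]; exact h1'.1)
      have hM2match : IsMatchingF G M2 :=
        matching_union (matching_subset Finset.sdiff_subset hMmatch) hN'match hdis
      have hdisj2 : Disjoint (M \ N) N' := by
        rw [Finset.disjoint_left]
        intro e he1 he2
        obtain ⟨v, hv⟩ := sym2_exists_mem e
        exact hdis v ⟨e, he1, hv⟩ ⟨e, he2, hv⟩
      have hM2card : M2.card = M.card := by
        rw [hM2, Finset.card_union_of_disjoint hdisj2, Finset.card_sdiff_of_subset hNsub, hN'card]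
        have := Finset.card_le_card hNsub
        omega
      have hM2mem : M2 ∈ 𝒞₂ := Finset.mem_filter.2
        ⟨Finset.mem_filter.2 ⟨Finset.mem_univ _, hM2match⟩, by rw [hM2card, hMcard]⟩
      have hPle := hmaxP M2 hM2mem
      -- now show `Pm G M < Pm G M2`, a contradiction
      set ψ : V → V := fun v => if v = z then b else v with hψ
      have hψC1 : ∀ v ∈ C1, ψ v ∈ satSet N' := by
        intro v hv
        rw [hsatN']
        by_cases hvz : v = z
        · rw [hψ]
          simp only [hvz, if_pos rfl]
          exact Or.inr rfl
        · rw [hψ]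
          simp only [if_neg hvz]
          exact Or.inl ⟨hv, hvz⟩
      have hsubN'T : satSet N' ⊆ satSet M2 := satSet_mono Finset.subset_union_right
      have hznotC : ∀ v', v' ∈ S → v' ∉ C1 → v' ≠ z := by
        intro v' hv'S hv'C h
        exact hv'C (by rw [h]; exact hzC1)
      have hwz : w ≠ z := hznotC w hwS hwC1
      set f : V × V → V × V := fun pq => (ψ pq.1, ψ pq.2) with hf
      set s1 := (@Finset.filter (V × V) (fun p => Rch G (satSet M) p.1 p.2)
        (fun _ => Classical.propDecidable _) Finset.univ) with hs1
      set s2 := (@Finset.filter (V × V) (fun p => Rch G (satSet M2) p.1 p.2)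
        (fun _ => Classical.propDecidable _) Finset.univ) with hs2
      have hmap : ∀ pq ∈ s1, f pq ∈ s2 := by
        intro pq hpq
        have hr : Rch G S pq.1 pq.2 := mem_goodF.1 hpq
        rw [hs2]
        refine mem_goodF.2 ?_
        by_cases h1C : pq.1 ∈ C1
        · have h2C : pq.2 ∈ C1 := Rch.trans h1C hr
          have := hpreN' (ψ pq.1) (ψ pq.2) (hψC1 _ h1C) (hψC1 _ h2C)
          exact this.mono hsubN'T
        · have h2C : pq.2 ∉ C1 := fun h => h1C (Rch.trans h (Rch.symm hr))
          have hz1 : pq.1 ≠ z := hznotC _ hr.mem_left h1C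
          have hz2 : pq.2 ≠ z := hznotC _ hr.mem_right h2C
          have hRch2 : Rch G (satSet M2) pq.1 pq.2 := by
            refine Rch.transfer hr (fun w' hw' => ?_)
            rw [hsatM2]
            refine Or.inl ⟨hw'.mem_right, fun hwz' => h1C ?_⟩
            exact Rch.trans hzC1 (Rch.symm (by rw [← hwz'] at hzC1 ⊢; exact hw'))
          have e1 : ψ pq.1 = pq.1 := if_neg hz1
          have e2 : ψ pq.2 = pq.2 := if_neg hz2
          show Rch G (satSet M2) (ψ pq.1) (ψ pq.2)
          rw [e1, e2]
          exact hRch2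
      have hψinj : ∀ v1, v1 ∈ S → ∀ v2, v2 ∈ S → ψ v1 = ψ v2 → v1 = v2 := by
        intro v1 hv1 v2 hv2 heq
        rw [hψ] at heq
        by_cases h1z : v1 = z <;> by_cases h2z : v2 = z
        · rw [h1z, h2z]
        · simp only [if_pos h1z, if_neg h2z] at heq
          rw [← heq] at hv2
          exact absurd hv2 hbS
        · simp only [if_neg h1z, if_pos h2z] at heq
          rw [heq] at hv1
          exact absurd hv1 hbS
        · simpa only [if_neg h1z, if_neg h2z] using heq
      have hinj : Set.InjOn f ↑s1 := by
        intro pq hpq pq' hpq' heq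
        have hr : Rch G S pq.1 pq.2 := mem_goodF.1 (by exact hpq)
        have hr' : Rch G S pq'.1 pq'.2 := mem_goodF.1 (by exact hpq')
        have heq1 : ψ pq.1 = ψ pq'.1 := congrArg Prod.fst heq
        have heq2 : ψ pq.2 = ψ pq'.2 := congrArg Prod.snd heq
        have e1 := hψinj _ hr.mem_left _ hr'.mem_left heq1
        have e2 := hψinj _ hr.mem_right _ hr'.mem_right heq2
        exact Prod.ext e1 e2
      have hbM2 : b ∈ satSet M2 := by rw [hsatM2]; exact Or.inr rfl
      have hwM2 : w ∈ satSet M2 := by rw [hsatM2]; exact Or.inl ⟨hwS, hwz⟩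
      have hbw_mem : (b, w) ∈ s2 := mem_goodF.2 (rch_of_adj hbM2 hwM2 hbw)
      have hnotin : (b, w) ∉ s1.image f := by
        intro hmem
        obtain ⟨pq, hpq, heq⟩ := Finset.mem_image.1 hmem
        have hr : Rch G S pq.1 pq.2 := mem_goodF.1 hpq
        have heq1 : ψ pq.1 = b := congrArg Prod.fst heq
        have heq2 : ψ pq.2 = w := congrArg Prod.snd heq
        have h1z : pq.1 = z := by
          by_contra hc
          rw [hψ] at heq1
          simp only [if_neg hc] at heq1
          exact hbS (by rw [← heq1]; exact hr.mem_left)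
        have h2z : pq.2 = w := by
          by_cases hc : pq.2 = z
          · rw [hψ] at heq2
            simp only [if_pos hc] at heq2
            exact absurd (by rw [heq2]; exact hwS) hbS
          · rw [hψ] at heq2
            simpa only [if_neg hc] using heq2
        apply hbad
        have hr' := hr
        rw [h1z, h2z] at hr'
        exact Rch.trans hzC1 hr'
      have hlt : s1.card < s2.card := by
        have hcardeq : (s1.image f).card = s1.card := Finset.card_image_of_injOn hinj
        have himg : s1.image f ⊆ s2 := by
          intro pq hpq
          obtain ⟨pq', hpq', heq⟩ := Finset.mem_image.1 hpq
          exact heq ▸ hmap pq' hpq'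
        have hss : s1.image f ⊂ s2 :=
          (Finset.ssubset_iff_of_subset himg).2 ⟨(b, w), hbw_mem, hnotin⟩
        calc s1.card = (s1.image f).card := hcardeq.symm
          _ < s2.card := Finset.card_lt_card hss
      have hPm1 : Pm G M = s1.card := rfl
      have hPm2 : Pm G M2 = s2.card := rfl
      rw [hPm1, hPm2] at hPle
      omega
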